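/- arXiv:2212.08714 — 2 statements merged into one kernel-verified Lean document; each statement's English description precedes it below -/
import Mathlib

section
/- For a measurable function f ∈ L¹(0, ∞) + L^∞(0, ∞) and t > 0, K(f, t; L¹, L^∞) = ∫₀^t μ_u(f) du, where μ(f) is the decreasing rearrangement of |f|. -/
open MeasureTheory Set ENNReal

/-- Lebesgue measure restricted to `(0, ∞)`. -/
noncomputable def mRes : Measure ℝ := volume.restrict (Set.Ioi 0)

/-- The decreasing rearrangement of `|f|` for a function `f` on `(0, ∞)`:
`μ_u(f) = inf { s > 0 : |{ |f| > s }| ≤ u }`. -/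
noncomputable def mu (f : ℝ → ℝ) (u : ℝ) : ℝ :=
  sInf {s : ℝ | 0 < s ∧ mRes {x | s < |f x|} ≤ ENNReal.ofReal u}

/-- The K-functional of the couple `(L^p(0,∞), L^q(0,∞))`:
`K(f, t) = inf { ‖g‖_p + t ‖h‖_q : f = g + h, g ∈ L^p, h ∈ L^q }`. -/
noncomputable def KLp (p q : ℝ≥0∞) (f : ℝ → ℝ) (t : ℝ) : ℝ :=
  sInf {r : ℝ | ∃ g h : ℝ → ℝ, f = g + h ∧ MemLp g p mRes ∧ MemLp h q mRes ∧
    r = (eLpNorm g p mRes).toReal + t * (eLpNorm h q mRes).toReal}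

namespace KFunctionalAux

/-- The distribution function of `|f|` w.r.t. `mRes`. -/
noncomputable def dd (f : ℝ → ℝ) (s : ℝ) : ℝ≥0∞ := mRes {x | s < |f x|}

/-- The defining set of `mu f u`. -/
def SS (f : ℝ → ℝ) (u : ℝ) : Set ℝ := {s : ℝ | 0 < s ∧ dd f s ≤ ENNReal.ofReal u}

lemma mu_eq (f : ℝ → ℝ) (u : ℝ) : mu f u = sInf (SS f u) := rfl

lemma dd_anti (f : ℝ → ℝ) : Antitone (dd f) :=
  fun _ _ h => measure_mono fun _ hx => lt_of_le_of_lt h hx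

lemma bddBelow_SS (f : ℝ → ℝ) (u : ℝ) : BddBelow (SS f u) :=
  ⟨0, fun _ hs => hs.1.le⟩

lemma mu_nonneg (f : ℝ → ℝ) (u : ℝ) : 0 ≤ mu f u :=
  Real.sInf_nonneg fun _ hs => hs.1.le

/-- Right-continuity of the distribution function (continuity from below of measures). -/
lemma dd_right_cont (f : ℝ → ℝ) (s : ℝ) :
    dd f s = ⨆ n : ℕ, dd f (s + 1 / (n + 1)) := by
  have hset : {x : ℝ | s < |f x|} = ⋃ n : ℕ, {x : ℝ | s + 1 / (n + 1) < |f x|} := by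
    ext x
    simp only [mem_setOf_eq, mem_iUnion]
    constructor
    · intro h
      obtain ⟨n, hn⟩ := exists_nat_one_div_lt (sub_pos.2 h)
      exact ⟨n, by linarith⟩
    · rintro ⟨n, hn⟩
      have h1 : (0 : ℝ) < 1 / (n + 1) := by positivity
      linarith
  have hmono : Monotone fun n : ℕ => {x : ℝ | s + 1 / (n + 1) < |f x|} := by
    intro m n hmn x hx
    simp only [mem_setOf_eq] at hx ⊢
    have : (1 : ℝ) / (n + 1) ≤ 1 / (m + 1) := by
      apply one_div_le_one_div_of_le (by positivity)
      exact_mod_cast Nat.succ_le_succ hmn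
    linarith
  rw [dd, hset, hmono.measure_iUnion]
  rfl

/-- The fundamental inverse relation between `mu` and the distribution function. -/
lemma mu_le_iff {f : ℝ → ℝ} {u : ℝ} (hne : (SS f u).Nonempty) {s : ℝ} (hs : 0 ≤ s) :
    mu f u ≤ s ↔ dd f s ≤ ENNReal.ofReal u := by
  constructor
  · intro h
    rw [dd_right_cont f s]
    refine iSup_le fun n => ?_
    have hpos : (0 : ℝ) < 1 / (n + 1) := by positivity
    have hlt : mu f u < s + 1 / (n + 1) := lt_of_le_of_lt h (by linarith)
    obtain ⟨σ, hσS, hσlt⟩ := Real.lt_sInf_add_pos hne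
      (show (0 : ℝ) < s + 1 / (n + 1) - mu f u by rw [mu_eq] at hlt; linarith)
    rw [← mu_eq] at hσlt
    exact le_trans (dd_anti f (by linarith)) hσS.2
  · intro h
    rcases eq_or_lt_of_le hs with rfl | hs'
    · -- s = 0
      have hmem : ∀ ε : ℝ, 0 < ε → mu f u ≤ ε := fun ε hε =>
        csInf_le (bddBelow_SS f u) ⟨hε, le_trans (dd_anti f hε.le) h⟩
      by_contra hcon
      push_neg at hcon
      exact absurd (hmem (mu f u / 2) (by linarith)) (by linarith)
    · exact csInf_le (bddBelow_SS f u) ⟨hs', h⟩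

lemma dd_mu_le {f : ℝ → ℝ} {u : ℝ} (hne : (SS f u).Nonempty) :
    dd f (mu f u) ≤ ENNReal.ofReal u :=
  (mu_le_iff hne (mu_nonneg f u)).1 le_rfl

lemma mu_antitoneOn {f : ℝ → ℝ} (hne : ∀ u : ℝ, 0 < u → (SS f u).Nonempty) :
    AntitoneOn (mu f) (Ioi 0) := by
  intro u hu v _ huv
  rw [mu_eq, mu_eq]
  refine csInf_le_csInf (bddBelow_SS f v) (hne u hu) fun s hs => ?_
  exact ⟨hs.1, hs.2.trans (ENNReal.ofReal_le_ofReal huv)⟩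

lemma mu_aemeasurable {f : ℝ → ℝ} (hne : ∀ u : ℝ, 0 < u → (SS f u).Nonempty) :
    AEMeasurable (mu f) (volume.restrict (Ioi 0)) :=
  aemeasurable_restrict_of_antitoneOn measurableSet_Ioi (mu_antitoneOn hne)

/-- Equimeasurability: `mu f` (on `(0,∞)`) has the same distribution function as `|f|`. -/
lemma claimB {f : ℝ → ℝ} (hne : ∀ u : ℝ, 0 < u → (SS f u).Nonempty) {s : ℝ} (hs : 0 ≤ s) :
    volume.restrict (Ioi 0) {u : ℝ | s < mu f u} = dd f s := by
  rw [Measure.restrict_apply' measurableSet_Ioi]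
  have hiff : ∀ u : ℝ, 0 < u → (s < mu f u ↔ ENNReal.ofReal u < dd f s) := by
    intro u hu
    rw [← not_le, ← not_le, not_iff_not]
    exact mu_le_iff (hne u hu) hs
  rcases eq_top_or_lt_top (dd f s) with htop | hfin
  · have : {u : ℝ | s < mu f u} ∩ Ioi 0 = Ioi 0 := by
      refine inter_eq_right.2 fun u hu => ?_
      exact (hiff u hu).2 (htop ▸ ENNReal.ofReal_lt_top)
    rw [this, Real.volume_Ioi, htop]
  · have : {u : ℝ | s < mu f u} ∩ Ioi 0 = Ioo 0 ((dd f s).toReal) := by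
      ext u
      simp only [mem_inter_iff, mem_setOf_eq, mem_Ioi, mem_Ioo]
      constructor
      · rintro ⟨h1, h2⟩
        exact ⟨h2, (ENNReal.ofReal_lt_iff_lt_toReal h2.le hfin.ne).1 ((hiff u h2).1 h1)⟩
      · rintro ⟨h1, h2⟩
        exact ⟨(hiff u h1).2 ((ENNReal.ofReal_lt_iff_lt_toReal h1.le hfin.ne).2 h2), h1⟩
    rw [this, Real.volume_Ioo, sub_zero, ENNReal.ofReal_toReal hfin.ne]

/-- Nonemptiness of `SS f u` for `u > 0`, given `|f| ≤ |g| + c` a.e. with `g ∈ L¹`. -/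
lemma SS_nonempty {f g : ℝ → ℝ} {c : ℝ} (hg : MemLp g 1 mRes)
    (hfb : ∀ᵐ x ∂mRes, |f x| ≤ |g x| + c) (hc : 0 ≤ c) {u : ℝ} (hu : 0 < u) :
    (SS f u).Nonempty := by
  set L := ∫⁻ x, ‖g x‖ₑ ∂mRes with hLdef
  have hL : L ≠ ⊤ := by
    have := hg.2
    rw [eLpNorm_one_eq_lintegral_enorm] at this
    exact this.ne
  set s := (L.toReal + 1) / u with hsdef
  have hs : 0 < s := div_pos (by positivity) hu
  refine ⟨s + c, by linarith, ?_⟩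
  have step1 : dd f (s + c) ≤ mRes {x | s < |g x|} := by
    refine measure_mono_ae ?_
    filter_upwards [hfb] with x hx hmem
    have hmem' : _ + c < |f x| := hmem
    show _ < |g x|
    linarith
  have step2 : mRes {x | s < |g x|} ≤ L / ENNReal.ofReal s := by
    refine le_trans (measure_mono fun x hx => ?_)
      (meas_ge_le_lintegral_div hg.1.enorm
        (by simp [ENNReal.ofReal_eq_zero, not_le, hs]) ENNReal.ofReal_ne_top)
    simp only [mem_setOf_eq] at hx ⊢
    rw [Real.enorm_eq_ofReal_abs]
    exact ENNReal.ofReal_le_ofReal hx.le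
  have step3 : L / ENNReal.ofReal s ≤ ENNReal.ofReal u := by
    refine ENNReal.div_le_of_le_mul ?_
    rw [← ENNReal.ofReal_mul hu.le, hsdef, mul_div_cancel₀ _ hu.ne']
    calc L = ENNReal.ofReal L.toReal := (ENNReal.ofReal_toReal hL).symm
    _ ≤ ENNReal.ofReal (L.toReal + 1) := ENNReal.ofReal_le_ofReal (by linarith)
  exact le_trans step1 (le_trans step2 step3)

/-- Subadditivity-type bound: `mu f u ≤ mu g u + c` when `|f| ≤ |g| + c` a.e. -/
lemma mu_le_mu_add {f g : ℝ → ℝ} {c : ℝ} (hg : MemLp g 1 mRes)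
    (hfb : ∀ᵐ x ∂mRes, |f x| ≤ |g x| + c) (hc : 0 ≤ c) {u : ℝ} (hu : 0 < u) :
    mu f u ≤ mu g u + c := by
  have hSg : (SS g u).Nonempty :=
    SS_nonempty hg (ae_of_all _ fun x => le_of_eq (add_zero _).symm) le_rfl hu
  have key : ∀ σ ∈ SS g u, mu f u ≤ σ + c := by
    intro σ hσ
    refine csInf_le (bddBelow_SS f u) ⟨by have := hσ.1; linarith, ?_⟩
    refine le_trans (measure_mono_ae ?_) hσ.2
    filter_upwards [hfb] with x hx hmem
    have hmem' : _ + c < |f x| := hmem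
    show _ < |g x|
    linarith
  have h2 : mu f u - c ≤ sInf (SS g u) :=
    le_csInf hSg fun σ hσ => by linarith [key σ hσ]
  rw [← mu_eq] at h2; linarith

/-- Layer cake for the truncated rearrangement: equimeasurability transfers integrals. -/
lemma lintegral_mu_trunc {f : ℝ → ℝ} (hf : AEMeasurable f mRes)
    (hne : ∀ u : ℝ, 0 < u → (SS f u).Nonempty) {σ : ℝ} (hσ : 0 ≤ σ) :
    ∫⁻ u in Ioi (0 : ℝ), ENNReal.ofReal (max (mu f u - σ) 0) =
      ∫⁻ x, ENNReal.ofReal (max (|f x| - σ) 0) ∂mRes := by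
  have hmble1 : AEMeasurable (fun u => max (mu f u - σ) 0) (volume.restrict (Ioi 0)) :=
    ((mu_aemeasurable hne).sub_const σ).max aemeasurable_const
  have hmble2 : AEMeasurable (fun x => max (|f x| - σ) 0) mRes :=
    (((measurable_abs.comp_aemeasurable hf).sub_const σ).max aemeasurable_const)
  have e1 := lintegral_eq_lintegral_meas_lt (volume.restrict (Ioi (0 : ℝ)))
    (f := fun u => max (mu f u - σ) 0) (ae_of_all _ fun u => le_max_right _ _) hmble1
  have e2 := lintegral_eq_lintegral_meas_lt mRes
    (f := fun x => max (|f x| - σ) 0) (ae_of_all _ fun x => le_max_right _ _) hmble2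
  rw [e1, e2]
  refine setLIntegral_congr_fun measurableSet_Ioi (fun s hs => ?_)
  have hs0 : (0 : ℝ) < s := hs
  have h1 : {u : ℝ | s < max (mu f u - σ) 0} = {u : ℝ | s + σ < mu f u} := by
    ext u
    simp only [mem_setOf_eq, lt_max_iff]
    constructor
    · rintro (h | h)
      · linarith
      · linarith
    · intro h; left; linarith
  have h2 : {x : ℝ | s < max (|f x| - σ) 0} = {x : ℝ | s + σ < |f x|} := by
    ext x
    simp only [mem_setOf_eq, lt_max_iff]
    constructor
    · rintro (h | h)
      · linarith
      · linarith
    · intro h; left; linarith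
  rw [h1, h2]
  exact claimB hne (by linarith)

/-- Equimeasurability implies equal `L¹` mass: `∫₀^∞ mu f = ∫ |f|`. -/
lemma lintegral_mu {f : ℝ → ℝ} (hf : AEMeasurable f mRes)
    (hne : ∀ u : ℝ, 0 < u → (SS f u).Nonempty) :
    ∫⁻ u in Ioi (0 : ℝ), ENNReal.ofReal (mu f u) = ∫⁻ x, ENNReal.ofReal |f x| ∂mRes := by
  have key := lintegral_mu_trunc hf hne (le_refl (0 : ℝ))
  simp only [sub_zero] at key
  calc ∫⁻ u in Ioi (0 : ℝ), ENNReal.ofReal (mu f u)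
      = ∫⁻ u in Ioi (0 : ℝ), ENNReal.ofReal (max (mu f u) 0) :=
        lintegral_congr fun u => by rw [max_eq_left (mu_nonneg f u)]
  _ = ∫⁻ x, ENNReal.ofReal (max |f x| 0) ∂mRes := key
  _ = ∫⁻ x, ENNReal.ofReal |f x| ∂mRes :=
        lintegral_congr fun x => by rw [max_eq_left (abs_nonneg _)]

/-- The a.e. bound coming from a decomposition `f = g + h`, `h ∈ L^∞`. -/
lemma abs_le_decomp {f g h : ℝ → ℝ} (hfgh : f = g + h) (hh : MemLp h ∞ mRes) :
    ∀ᵐ x ∂mRes, |f x| ≤ |g x| + (eLpNorm h ∞ mRes).toReal := by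
  have hlt : eLpNormEssSup h mRes < ⊤ := by
    have := hh.2; rwa [eLpNorm_exponent_top] at this
  filter_upwards [enorm_ae_le_eLpNormEssSup h mRes] with x hx
  have hxb : |h x| ≤ (eLpNorm h ∞ mRes).toReal := by
    rw [eLpNorm_exponent_top]
    have := ENNReal.toReal_mono hlt.ne hx
    simpa [Real.norm_eq_abs] using this
  calc |f x| = |g x + h x| := by rw [hfgh]; rfl
  _ ≤ |g x| + |h x| := abs_add_le _ _
  _ ≤ _ := by linarith

end KFunctionalAux

open KFunctionalAux

set_option maxHeartbeats 1000000 in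
/-- For `f ∈ L¹ + L^∞` on `(0, ∞)` and `t > 0`,
`K(f, t; L¹, L^∞) = ∫₀^t μ_u(f) du`. -/
theorem K_L1_Linfty_eq_integral_rearrangement
    (f : ℝ → ℝ) (hf : Measurable f)
    (hsum : ∃ g h : ℝ → ℝ, f = g + h ∧ MemLp g 1 mRes ∧ MemLp h ∞ mRes)
    (t : ℝ) (ht : 0 < t) :
    KLp 1 ∞ f t = ∫ u in Set.Ioc (0 : ℝ) t, mu f u := by
  obtain ⟨g0, h0, hfgh0, hg0, hh0⟩ := hsum
  have hfae : AEMeasurable f mRes := hf.aemeasurable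
  have hb0 : ∀ᵐ x ∂mRes, |f x| ≤ |g0 x| + (eLpNorm h0 ∞ mRes).toReal :=
    abs_le_decomp hfgh0 hh0
  have hne : ∀ u : ℝ, 0 < u → (SS f u).Nonempty := fun u hu =>
    SS_nonempty hg0 hb0 ENNReal.toReal_nonneg hu
  set σ : ℝ := mu f t with hσdef
  have hσ0 : 0 ≤ σ := mu_nonneg f t
  have hddσ : dd f σ ≤ ENNReal.ofReal t := dd_mu_le (hne t ht)
  set J : ℝ≥0∞ := ∫⁻ u in Ioc (0 : ℝ) t, ENNReal.ofReal (mu f u) with hJdef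
  set T : ℝ≥0∞ := ∫⁻ x, ENNReal.ofReal (max (|f x| - σ) 0) ∂mRes with hTdef
  -- Step 1: the truncated lintegral over (0,∞) equals the one over (0,t]
  have hsplit : ∫⁻ u in Ioi (0 : ℝ), ENNReal.ofReal (max (mu f u - σ) 0) =
      ∫⁻ u in Ioc (0 : ℝ) t, ENNReal.ofReal (max (mu f u - σ) 0) := by
    rw [← Set.Ioc_union_Ioi_eq_Ioi ht.le,
      lintegral_union measurableSet_Ioi (Set.Ioc_disjoint_Ioi le_rfl)]
    have hzero : ∫⁻ u in Ioi t, ENNReal.ofReal (max (mu f u - σ) 0) = 0 := by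
      rw [setLIntegral_congr_fun measurableSet_Ioi
        (fun u (hu : t < u) => ?_), lintegral_zero]
      have : mu f u ≤ σ := mu_antitoneOn hne ht (lt_trans ht hu) hu.le
      rw [max_eq_right (by linarith), ENNReal.ofReal_zero]
    rw [hzero, add_zero]
  -- Step 2: J = T + σ·t
  have hstar : J = T + ENNReal.ofReal σ * ENNReal.ofReal t := by
    have hpt : ∫⁻ u in Ioc (0 : ℝ) t, ENNReal.ofReal (mu f u) =
        ∫⁻ u in Ioc (0 : ℝ) t,
          (ENNReal.ofReal (max (mu f u - σ) 0) + ENNReal.ofReal σ) := by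
      refine setLIntegral_congr_fun measurableSet_Ioc (fun u hu => ?_)
      have hu1 : (0 : ℝ) < u := hu.1
      have hu2 : u ≤ t := hu.2
      have hge : σ ≤ mu f u := mu_antitoneOn hne hu1 ht hu2
      rw [max_eq_left (by linarith), ← ENNReal.ofReal_add (by linarith) hσ0,
        sub_add_cancel]
    rw [hJdef, hpt, lintegral_add_right _ measurable_const, setLIntegral_const,
      Real.volume_Ioc, sub_zero, ← hsplit, lintegral_mu_trunc hfae hne hσ0, ← hTdef]
  -- Step 3: T is finite
  have hT : T ≠ ⊤ := by
    have hbound : ∀ᵐ x ∂mRes, ENNReal.ofReal (max (|f x| - σ) 0) ≤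
        ENNReal.ofReal |g0 x| +
          {x : ℝ | σ < |f x|}.indicator (fun _ => eLpNorm h0 ∞ mRes) x := by
      filter_upwards [hb0] with x hx
      rcases le_or_gt (|f x|) σ with hle | hgt
      · rw [max_eq_right (by linarith), ENNReal.ofReal_zero]
        exact zero_le
      · rw [Set.indicator_of_mem (by exact hgt)]
        calc ENNReal.ofReal (max (|f x| - σ) 0) ≤ ENNReal.ofReal (|g0 x| +
              (eLpNorm h0 ∞ mRes).toReal) := by
              apply ENNReal.ofReal_le_ofReal
              rcases max_cases (|f x| - σ) 0 with ⟨h1, _⟩ | ⟨h1, _⟩ <;> rw [h1] <;>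
                [skip; positivity] <;> linarith
        _ ≤ ENNReal.ofReal |g0 x| + ENNReal.ofReal (eLpNorm h0 ∞ mRes).toReal :=
              ENNReal.ofReal_add_le
        _ = ENNReal.ofReal |g0 x| + eLpNorm h0 ∞ mRes := by
              rw [ENNReal.ofReal_toReal hh0.2.ne]
    have : T ≤ ∫⁻ x, (ENNReal.ofReal |g0 x| +
        {x : ℝ | σ < |f x|}.indicator (fun _ => eLpNorm h0 ∞ mRes) x) ∂mRes :=
      lintegral_mono_ae hbound
    have hmg : AEMeasurable (fun x => ENNReal.ofReal |g0 x|) mRes :=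
      (measurable_abs.comp_aemeasurable hg0.1.aemeasurable).ennreal_ofReal
    rw [lintegral_add_left' hmg] at this
    rw [lintegral_indicator (by exact measurableSet_lt measurable_const (measurable_abs.comp hf))] at this
    rw [setLIntegral_const] at this
    refine ne_top_of_le_ne_top ?_ this
    apply ENNReal.add_ne_top.2
    constructor
    · have : ∫⁻ x, ENNReal.ofReal |g0 x| ∂mRes = eLpNorm g0 1 mRes := by
        rw [eLpNorm_one_eq_lintegral_enorm]
        exact lintegral_congr fun x => (Real.enorm_eq_ofReal_abs _).symm
      rw [this]; exact hg0.2.ne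
    · exact ENNReal.mul_ne_top hh0.2.ne
        (ne_top_of_le_ne_top ENNReal.ofReal_ne_top hddσ)
  have hJ : J ≠ ⊤ := by
    rw [hstar]
    exact ENNReal.add_ne_top.2 ⟨hT, ENNReal.mul_ne_top ENNReal.ofReal_ne_top
      ENNReal.ofReal_ne_top⟩
  -- The candidate decomposition: truncation of f at height σ
  set h1 : ℝ → ℝ := fun x => max (-σ) (min σ (f x)) with hh1def
  set g1 : ℝ → ℝ := fun x => f x - h1 x with hg1def
  have hh1meas : Measurable h1 := measurable_const.max (measurable_const.min hf)
  have hg1meas : Measurable g1 := hf.sub hh1meas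
  have hh1bdd : ∀ x, |h1 x| ≤ σ := by
    intro x
    rw [abs_le]
    constructor
    · exact le_max_left _ _
    · exact max_le (by linarith) (min_le_left _ _)
  have habs : ∀ x, |g1 x| = max (|f x| - σ) 0 := by
    intro x
    simp only [hg1def, hh1def]
    rcases le_total (f x) σ with hfs | hfs
    · rcases le_total (-σ) (f x) with hsf | hsf
      · rw [min_eq_right hfs, max_eq_right hsf, sub_self, abs_zero]
        rw [max_eq_right]
        have : |f x| ≤ σ := abs_le.2 ⟨hsf, hfs⟩
        linarith
      · rw [min_eq_right hfs, max_eq_left hsf]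
        have hfx0 : f x ≤ 0 := by linarith
        rw [abs_of_nonpos (by linarith), abs_of_nonpos hfx0,
          max_eq_left (by linarith)]
        ring
    · rw [min_eq_left hfs, max_eq_right (by linarith : -σ ≤ σ)]
      rw [abs_of_nonneg (by linarith), abs_of_nonneg (by linarith : 0 ≤ f x),
        max_eq_left (by linarith)]
  have hg1norm : eLpNorm g1 1 mRes = T := by
    rw [eLpNorm_one_eq_lintegral_enorm, hTdef]
    apply lintegral_congr fun x => ?_
    rw [Real.enorm_eq_ofReal_abs, habs]
  have hh1norm : eLpNorm h1 ∞ mRes ≤ ENNReal.ofReal σ := by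
    rw [eLpNorm_exponent_top]
    exact eLpNormEssSup_le_of_ae_bound
      (ae_of_all _ fun x => by rw [Real.norm_eq_abs]; exact hh1bdd x)
  have hg1mem : MemLp g1 1 mRes :=
    ⟨hg1meas.aestronglyMeasurable, by rw [hg1norm]; exact hT.lt_top⟩
  have hh1mem : MemLp h1 ∞ mRes :=
    ⟨hh1meas.aestronglyMeasurable, by
      rw [eLpNorm_exponent_top]
      exact lt_of_le_of_lt (by rw [← eLpNorm_exponent_top]; exact hh1norm)
        ENNReal.ofReal_lt_top⟩
  have hdecomp : f = g1 + h1 := by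
    funext x
    simp [hg1def]
  set KSet : Set ℝ := {r : ℝ | ∃ g h : ℝ → ℝ, f = g + h ∧ MemLp g 1 mRes ∧
    MemLp h ∞ mRes ∧
    r = (eLpNorm g 1 mRes).toReal + t * (eLpNorm h ∞ mRes).toReal} with hKSetdef
  set r1 : ℝ := (eLpNorm g1 1 mRes).toReal + t * (eLpNorm h1 ∞ mRes).toReal with hr1def
  have hr1mem : r1 ∈ KSet := ⟨g1, h1, hdecomp, hg1mem, hh1mem, rfl⟩
  have hr1le : r1 ≤ J.toReal := by
    have h1' : (eLpNorm g1 1 mRes).toReal = T.toReal := by rw [hg1norm]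
    have h2' : (eLpNorm h1 ∞ mRes).toReal ≤ σ := by
      have := ENNReal.toReal_mono ENNReal.ofReal_ne_top hh1norm
      rwa [ENNReal.toReal_ofReal hσ0] at this
    have h3' : J.toReal = T.toReal + σ * t := by
      rw [hstar, ENNReal.toReal_add hT (ENNReal.mul_ne_top ENNReal.ofReal_ne_top
        ENNReal.ofReal_ne_top), ← ENNReal.ofReal_mul hσ0,
        ENNReal.toReal_ofReal (by positivity)]
    rw [hr1def, h1', h3']
    nlinarith
  -- Lower bound: every admissible decomposition dominates J
  have hlower : ∀ r ∈ KSet, J.toReal ≤ r := by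
    rintro r ⟨g, h, hfgh, hg, hh, hr⟩
    set c : ℝ := (eLpNorm h ∞ mRes).toReal with hcdef
    have hc0 : 0 ≤ c := ENNReal.toReal_nonneg
    have hb : ∀ᵐ x ∂mRes, |f x| ≤ |g x| + c := abs_le_decomp hfgh hh
    have hgne : ∀ u : ℝ, 0 < u → (SS g u).Nonempty := fun u hu =>
      SS_nonempty hg (ae_of_all _ fun x => le_of_eq (add_zero _).symm) le_rfl hu
    have hJle : J ≤ eLpNorm g 1 mRes + ENNReal.ofReal c * ENNReal.ofReal t := by
      have hptwise : ∀ u ∈ Ioc (0 : ℝ) t, ENNReal.ofReal (mu f u) ≤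
          ENNReal.ofReal (mu g u) + ENNReal.ofReal c := by
        intro u hu
        calc ENNReal.ofReal (mu f u) ≤ ENNReal.ofReal (mu g u + c) :=
              ENNReal.ofReal_le_ofReal (mu_le_mu_add hg hb hc0 hu.1)
        _ ≤ _ := ENNReal.ofReal_add_le
      calc J ≤ ∫⁻ u in Ioc (0 : ℝ) t,
            (ENNReal.ofReal (mu g u) + ENNReal.ofReal c) := by
            rw [hJdef]
            exact setLIntegral_mono_ae' measurableSet_Ioc (ae_of_all _ hptwise)
      _ = (∫⁻ u in Ioc (0 : ℝ) t, ENNReal.ofReal (mu g u)) +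
            ENNReal.ofReal c * ENNReal.ofReal t := by
            rw [lintegral_add_right _ measurable_const, setLIntegral_const,
              Real.volume_Ioc, sub_zero]
      _ ≤ (∫⁻ u in Ioi (0 : ℝ), ENNReal.ofReal (mu g u)) +
            ENNReal.ofReal c * ENNReal.ofReal t := by
            gcongr
            exact Set.Ioc_subset_Ioi_self
      _ = eLpNorm g 1 mRes + ENNReal.ofReal c * ENNReal.ofReal t := by
            rw [lintegral_mu hg.1.aemeasurable hgne, eLpNorm_one_eq_lintegral_enorm]
            congr 1
            exact lintegral_congr fun x => (Real.enorm_eq_ofReal_abs _).symm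
    have hRfin : eLpNorm g 1 mRes + ENNReal.ofReal c * ENNReal.ofReal t ≠ ⊤ :=
      ENNReal.add_ne_top.2 ⟨hg.2.ne, ENNReal.mul_ne_top ENNReal.ofReal_ne_top
        ENNReal.ofReal_ne_top⟩
    have := ENNReal.toReal_mono hRfin hJle
    rw [ENNReal.toReal_add hg.2.ne (ENNReal.mul_ne_top ENNReal.ofReal_ne_top
      ENNReal.ofReal_ne_top), ← ENNReal.ofReal_mul hc0,
      ENNReal.toReal_ofReal (by positivity)] at this
    rw [hr, hcdef]
    linarith [this]
  -- Put everything together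
  have hKeq : KLp 1 ∞ f t = J.toReal := by
    have hbddK : BddBelow KSet := by
      refine ⟨0, fun r hr => ?_⟩
      obtain ⟨g, h, _, _, _, hr⟩ := hr
      rw [hr]
      positivity
    apply le_antisymm
    · exact le_trans (csInf_le hbddK hr1mem) hr1le
    · exact le_csInf ⟨r1, hr1mem⟩ hlower
  rw [hKeq]
  rw [integral_eq_lintegral_of_nonneg_ae (ae_of_all _ fun u => mu_nonneg f u)
    (((mu_aemeasurable hne).mono_measure
      (Measure.restrict_mono Set.Ioc_subset_Ioi_self le_rfl)).aestronglyMeasurable)]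
end

section
/- If T : L¹ + L^∞ → L¹ + L^∞ is linear with ‖T : L¹ → L¹‖ ≤ 1 and ‖T : L^∞ → L^∞‖ ≤ 1, then for every f ∈ L¹ + L^∞, Tf is submajorized by f: for all t > 0, ∫₀^t μ_s(Tf) ds ≤ ∫₀^t μ_s(f) ds. -/
open MeasureTheory Set ENNReal

namespace Submaj

/-- distribution function -/
noncomputable def DD (f : ℝ → ℝ) (s : ℝ) : ℝ≥0∞ := mRes {x | s < |f x|}

def SS (f : ℝ → ℝ) (u : ℝ) : Set ℝ := {s : ℝ | 0 < s ∧ DD f s ≤ ENNReal.ofReal u}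

lemma mu_eq (f : ℝ → ℝ) (u : ℝ) : mu f u = sInf (SS f u) := rfl

lemma DD_anti (f : ℝ → ℝ) : Antitone (DD f) := fun s s' h =>
  measure_mono (fun x hx => lt_of_le_of_lt h hx)

lemma SS_bddBelow (f : ℝ → ℝ) (u : ℝ) : BddBelow (SS f u) :=
  ⟨0, fun s hs => hs.1.le⟩

lemma mu_nonneg (f : ℝ → ℝ) (u : ℝ) : 0 ≤ mu f u :=
  Real.sInf_nonneg (fun s hs => hs.1.le)

def Good (f : ℝ → ℝ) : Prop := ∀ u : ℝ, 0 < u → (SS f u).Nonempty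

lemma ofReal_abs (x : ℝ) : ENNReal.ofReal |x| = (‖x‖₊ : ℝ≥0∞) :=
  (Real.enorm_eq_ofReal_abs x).symm

lemma good_of_mem1 {g : ℝ → ℝ} (hg : MemLp g 1 mRes) : Good g := by
  intro u hu
  set I := ∫⁻ x, (‖g x‖₊ : ℝ≥0∞) ∂mRes with hI
  have hIfin : I ≠ ∞ := by
    have h2 := hg.2
    rw [eLpNorm_one_eq_lintegral_enorm] at h2
    exact h2.ne
  have hufin : ENNReal.ofReal u ≠ 0 := by
    simp [ENNReal.ofReal_eq_zero, not_le, hu]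
  set s : ℝ := (I / ENNReal.ofReal u).toReal + 1 with hs_def
  have hIu : I / ENNReal.ofReal u ≠ ∞ := by
    exact (ENNReal.div_lt_top hIfin hufin).ne
  have hs0 : 0 < s := by positivity
  refine ⟨s, hs0, ?_⟩
  have hofs : ENNReal.ofReal s = I / ENNReal.ofReal u + 1 := by
    rw [hs_def, ENNReal.ofReal_add ENNReal.toReal_nonneg zero_le_one,
      ENNReal.ofReal_toReal hIu, ENNReal.ofReal_one]
  have hDD : DD g s ≤ I / ENNReal.ofReal s := by
    refine le_trans (measure_mono ?_)
      (meas_ge_le_lintegral_div hg.1.aemeasurable.enorm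
        (by simp [ENNReal.ofReal_eq_zero, not_le, hs0]) ENNReal.ofReal_ne_top)
    intro x hx
    have : ENNReal.ofReal s ≤ ENNReal.ofReal |g x| := ENNReal.ofReal_le_ofReal (le_of_lt hx)
    simpa [Real.enorm_eq_ofReal_abs] using this
  refine hDD.trans ?_
  rw [hofs, ENNReal.div_le_iff_le_mul (Or.inl ?_) (Or.inl ?_)]
  · calc I = ENNReal.ofReal u * (I / ENNReal.ofReal u) := by
          rw [ENNReal.mul_div_cancel hufin ENNReal.ofReal_ne_top]
      _ ≤ ENNReal.ofReal u * (I / ENNReal.ofReal u + 1) := by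
          exact mul_le_mul_right (le_add_of_nonneg_right zero_le_one) _
  · exact fun h => by simp at h
  · exact ENNReal.add_ne_top.mpr ⟨hIu, ENNReal.one_ne_top⟩

lemma DD_add_le {g h : ℝ → ℝ} {c : ℝ} (hh : ∀ᵐ x ∂mRes, |h x| ≤ c) (s : ℝ) :
    DD (g + h) (s + c) ≤ DD g s := by
  have hnull : mRes {x | c < |h x|} = 0 := by
    have := hh
    rw [MeasureTheory.ae_iff] at this
    simpa [not_le] using this
  calc DD (g + h) (s + c) ≤ mRes ({x | s < |g x|} ∪ {x | c < |h x|}) := by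
        refine measure_mono fun x hx => ?_
        by_contra hcon
        simp only [mem_union, mem_setOf_eq, not_or, not_lt] at hcon
        have hx' : s + c < |g x + h x| := hx
        have habs : |g x + h x| ≤ |g x| + |h x| := abs_add_le _ _
        linarith [hcon.1, hcon.2]
    _ ≤ DD g s + mRes {x | c < |h x|} := measure_union_le _ _
    _ = DD g s := by rw [hnull, add_zero]

lemma good_add {g h : ℝ → ℝ} {c : ℝ} (hg : Good g) (hc : 0 ≤ c)
    (hh : ∀ᵐ x ∂mRes, |h x| ≤ c) : Good (g + h) := by
  intro u hu
  obtain ⟨s, hs, hD⟩ := hg u hu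
  exact ⟨s + c, by linarith, le_trans (DD_add_le hh s) hD⟩

lemma mu_antitoneOn {f : ℝ → ℝ} (hf : Good f) : AntitoneOn (mu f) (Ioi 0) := by
  intro u hu u' _ huu'
  exact csInf_le_csInf (SS_bddBelow f u') (hf u hu)
    (fun s hs => ⟨hs.1, hs.2.trans (ENNReal.ofReal_le_ofReal huu')⟩)

lemma mu_add_le {g h : ℝ → ℝ} {c u : ℝ} (hg : Good g) (hc : 0 ≤ c)
    (hh : ∀ᵐ x ∂mRes, |h x| ≤ c) (hu : 0 < u) :
    mu (g + h) u ≤ mu g u + c := by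
  have h1 : ∀ s ∈ SS g u, mu (g + h) u - c ≤ s := by
    intro s hs
    have hmem : s + c ∈ SS (g + h) u :=
      ⟨by linarith [hs.1], (DD_add_le hh s).trans hs.2⟩
    have := csInf_le (SS_bddBelow (g + h) u) hmem
    rw [← mu_eq] at this
    linarith
  have h2 := le_csInf (hg u hu) h1
  rw [← mu_eq] at h2
  linarith

lemma vol_mu_gt_le (g : ℝ → ℝ) {s : ℝ} (hs : 0 < s) :
    volume ({u | s < mu g u} ∩ Ioi 0) ≤ mRes {x | s ≤ |g x|} := by
  set Db := mRes {x | s ≤ |g x|} with hDb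
  have hsub : ({u | s < mu g u} ∩ Ioi 0) ⊆ {u | ENNReal.ofReal u < Db} ∩ Ioi 0 := by
    rintro u ⟨hmu, hu⟩
    refine ⟨?_, hu⟩
    by_contra hle
    simp only [mem_setOf_eq, not_lt] at hle
    have hmule : mu g u ≤ s := by
      by_contra hgt
      push_neg at hgt
      set ε := (mu g u - s) / 2 with hε
      have hε0 : 0 < ε := by simp only [hε]; linarith
      have hmem : s + ε ∈ SS g u := by
        refine ⟨by linarith, le_trans (measure_mono ?_) hle⟩
        intro x hx
        have hx' : s + ε < |g x| := hx
        show s ≤ |g x|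
        linarith
      have := csInf_le (SS_bddBelow g u) hmem
      rw [← mu_eq] at this
      simp only [hε] at this
      linarith
    exact absurd hmule (not_le.mpr hmu)
  refine le_trans (measure_mono hsub) ?_
  rcases eq_top_or_lt_top Db with htop | hlt
  · rw [htop]; exact le_top
  · have hsub2 : {u | ENNReal.ofReal u < Db} ∩ Ioi 0 ⊆ Ioo 0 Db.toReal := by
      rintro u ⟨hu1, hu2⟩
      exact ⟨hu2, (ENNReal.ofReal_lt_iff_lt_toReal (le_of_lt hu2) hlt.ne).mp hu1⟩
    refine le_trans (measure_mono hsub2) ?_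
    rw [Real.volume_Ioo, sub_zero, ENNReal.ofReal_toReal hlt.ne]

lemma DD_le_vol_mu_ge {f : ℝ → ℝ} (hf : Good f) {r : ℝ} (hr : 0 < r) :
    DD f r ≤ volume ({u | r ≤ mu f u} ∩ Ioi 0) := by
  have hsub : ∀ u : ℝ, 0 < u → ENNReal.ofReal u < DD f r → r ≤ mu f u := by
    intro u hu hlt
    by_contra hlt'
    push_neg at hlt'
    rw [mu_eq] at hlt'
    obtain ⟨s', hs'mem, hs'lt⟩ := exists_lt_of_csInf_lt (hf u hu) hlt'
    exact absurd (le_trans (DD_anti f hs'lt.le) hs'mem.2) (not_le.mpr hlt)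
  rcases eq_top_or_lt_top (DD f r) with htop | hlt
  · have h1 : Ioi (0:ℝ) ⊆ {u | r ≤ mu f u} ∩ Ioi 0 := fun u hu =>
      ⟨hsub u hu (by rw [htop]; exact ENNReal.ofReal_lt_top), hu⟩
    calc DD f r ≤ volume (Ioi (0:ℝ)) := by rw [htop, Real.volume_Ioi]
      _ ≤ _ := measure_mono h1
  · have h1 : Ioo 0 (DD f r).toReal ⊆ {u | r ≤ mu f u} ∩ Ioi 0 := by
      rintro u ⟨h1, h2⟩
      exact ⟨hsub u h1 ((ENNReal.ofReal_lt_iff_lt_toReal h1.le hlt.ne).mpr h2), h1⟩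
    calc DD f r = volume (Ioo 0 (DD f r).toReal) := by
          rw [Real.volume_Ioo, sub_zero, ENNReal.ofReal_toReal hlt.ne]
      _ ≤ _ := measure_mono h1

lemma ofReal_max0 (a : ℝ) : ENNReal.ofReal (max a 0) = ENNReal.ofReal a := by
  rcases le_total a 0 with h | h
  · rw [max_eq_right h, ENNReal.ofReal_zero, eq_comm, ENNReal.ofReal_eq_zero]; exact h
  · rw [max_eq_left h]

/-- Claim C -/
lemma lintegral_mu_le {g : ℝ → ℝ} (hg : Good g) (hmg : AEMeasurable g mRes) :
    ∫⁻ u in Ioi (0:ℝ), ENNReal.ofReal (mu g u) ≤ ∫⁻ x, ENNReal.ofReal |g x| ∂mRes := by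
  have hmu_meas : AEMeasurable (mu g) (volume.restrict (Ioi 0)) :=
    aemeasurable_restrict_of_antitoneOn measurableSet_Ioi (mu_antitoneOn hg)
  rw [lintegral_eq_lintegral_meas_lt (volume.restrict (Ioi 0))
    (Filter.Eventually.of_forall fun u => mu_nonneg g u) hmu_meas]
  rw [lintegral_eq_lintegral_meas_le mRes
    (Filter.Eventually.of_forall fun x => abs_nonneg (g x)) (continuous_abs.measurable.comp_aemeasurable hmg)]
  refine lintegral_mono_ae ?_
  rw [ae_restrict_iff' measurableSet_Ioi]
  refine Filter.Eventually.of_forall fun s hs => ?_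
  rw [Measure.restrict_apply' measurableSet_Ioi]
  exact vol_mu_gt_le g hs

/-- Claim A -/
lemma lintegral_sub_le_mu {f : ℝ → ℝ} (hf : Good f) (hmf : AEMeasurable f mRes)
    {c : ℝ} (hc : 0 ≤ c) :
    ∫⁻ x, ENNReal.ofReal (|f x| - c) ∂mRes ≤
      ∫⁻ u in Ioi (0:ℝ), ENNReal.ofReal (mu f u - c) := by
  have hL : ∫⁻ x, ENNReal.ofReal (|f x| - c) ∂mRes
      = ∫⁻ s in Ioi (0:ℝ), mRes {x | s + c < |f x|} := by
    have h1 : ∫⁻ x, ENNReal.ofReal (|f x| - c) ∂mRes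
        = ∫⁻ x, ENNReal.ofReal (max (|f x| - c) 0) ∂mRes := by
      simp_rw [ofReal_max0]
    have hmeasF : AEMeasurable (fun x => max (|f x| - c) 0) mRes :=
      (((continuous_abs.measurable.comp_aemeasurable hmf).sub aemeasurable_const).max
        aemeasurable_const)
    have key := lintegral_eq_lintegral_meas_lt mRes
      (f := fun x => max (|f x| - c) 0)
      (Filter.Eventually.of_forall fun x => le_max_right _ _) hmeasF
    rw [h1, key]
    refine setLIntegral_congr_fun measurableSet_Ioi
      (fun s hs => ?_)
    congr 1
    ext x
    simp only [mem_setOf_eq, lt_max_iff]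
    constructor
    · rintro (h | h)
      · linarith
      · exact absurd hs (by simpa using not_lt.mpr h.le)
    · intro h; left; linarith
  have hR : ∫⁻ u in Ioi (0:ℝ), ENNReal.ofReal (mu f u - c)
      = ∫⁻ s in Ioi (0:ℝ), (volume.restrict (Ioi 0)) {u | s + c ≤ mu f u} := by
    have hmeas : AEMeasurable (fun u => max (mu f u - c) 0) (volume.restrict (Ioi 0)) := by
      refine aemeasurable_restrict_of_antitoneOn measurableSet_Ioi ?_
      intro a ha b hb hab
      exact max_le_max (sub_le_sub_right (mu_antitoneOn hf ha hb hab) c) le_rfl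
    have h1 : ∫⁻ u in Ioi (0:ℝ), ENNReal.ofReal (mu f u - c)
        = ∫⁻ u in Ioi (0:ℝ), ENNReal.ofReal (max (mu f u - c) 0) := by
      simp_rw [ofReal_max0]
    have key := lintegral_eq_lintegral_meas_le (volume.restrict (Ioi 0))
      (f := fun u => max (mu f u - c) 0)
      (Filter.Eventually.of_forall fun u => le_max_right _ _) hmeas
    rw [h1, key]
    refine setLIntegral_congr_fun measurableSet_Ioi
      (fun s hs => ?_)
    congr 1
    ext u
    simp only [mem_setOf_eq, le_max_iff]
    constructor
    · rintro (h | h)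
      · linarith
      · exact absurd hs (by simpa using not_lt.mpr h)
    · intro h; left; linarith
  rw [hL, hR]
  refine lintegral_mono_ae ?_
  rw [ae_restrict_iff' measurableSet_Ioi]
  refine Filter.Eventually.of_forall fun s hs => ?_
  rw [Measure.restrict_apply' measurableSet_Ioi]
  exact DD_le_vol_mu_ge hf (by simp only [mem_Ioi] at hs; linarith)


end Submaj

open Submaj

/-- If `T` is linear and contractive both on `L¹(0,∞)` and on `L^∞(0,∞)`, then for
every `f ∈ L¹ + L^∞`, `Tf` is submajorized by `f`:
`∫₀^t μ_s(Tf) ds ≤ ∫₀^t μ_s(f) ds` for all `t > 0`. -/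

theorem submajorization_of_L1_Linfty_contraction
    (T : (ℝ → ℝ) →ₗ[ℝ] (ℝ → ℝ))
    (hT1 : ∀ g : ℝ → ℝ, MemLp g 1 mRes →
      MemLp (T g) 1 mRes ∧ eLpNorm (T g) 1 mRes ≤ eLpNorm g 1 mRes)
    (hTinf : ∀ g : ℝ → ℝ, MemLp g ∞ mRes →
      MemLp (T g) ∞ mRes ∧ eLpNorm (T g) ∞ mRes ≤ eLpNorm g ∞ mRes)
    (f : ℝ → ℝ)
    (hsum : ∃ g h : ℝ → ℝ, f = g + h ∧ MemLp g 1 mRes ∧ MemLp h ∞ mRes)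
    (t : ℝ) (ht : 0 < t) :
    ∫ s in Set.Ioc (0 : ℝ) t, mu (T f) s ≤ ∫ s in Set.Ioc (0 : ℝ) t, mu f s := by
  obtain ⟨g₀, h₀, hf0, hg₀, hh₀⟩ := hsum
  have hfae : AEMeasurable f mRes := by
    rw [hf0]; exact hg₀.1.aemeasurable.add hh₀.1.aemeasurable
  -- an a.e. bound for h₀
  set e := (eLpNormEssSup h₀ mRes).toReal with he_def
  have he0 : 0 ≤ e := ENNReal.toReal_nonneg
  have hfin₀ : eLpNormEssSup h₀ mRes ≠ ⊤ := by
    have h2 := hh₀.2; rw [eLpNorm_exponent_top] at h2; exact h2.ne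
  have hh₀e : ∀ᵐ x ∂mRes, |h₀ x| ≤ e := by
    filter_upwards [ae_le_eLpNormEssSup (f := h₀) (μ := mRes)] with x hx
    have h3 := ENNReal.toReal_mono hfin₀ hx
    rwa [toReal_enorm, Real.norm_eq_abs] at h3
  have hGoodg₀ : Good g₀ := good_of_mem1 hg₀
  have hGoodf : Good f := by rw [hf0]; exact good_add hGoodg₀ he0 hh₀e
  set c := mu f t with hc_def
  have hc0 : 0 ≤ c := mu_nonneg f t
  set hstar : ℝ → ℝ := fun x => max (min (f x) c) (-c) with hhstar
  set gstar : ℝ → ℝ := fun x => f x - hstar x with hgstar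
  have hsplit : f = gstar + hstar := by
    funext x; simp only [hgstar, Pi.add_apply]; ring
  have habs_h : ∀ x, |hstar x| ≤ c := by
    intro x
    rw [abs_le]
    exact ⟨le_max_right _ _, max_le (le_trans (min_le_right _ _) le_rfl) (by linarith)⟩
  have habs_g : ∀ x, |gstar x| ≤ max (|f x| - c) 0 := by
    intro x
    simp only [hgstar, hhstar]
    rcases le_or_gt (f x) c with h1 | h1
    · rcases le_or_gt (-c) (f x) with h2 | h2
      · rw [min_eq_left h1, max_eq_left h2]
        simp
      · rw [min_eq_left h1, max_eq_right h2.le]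
        have hfx : f x < 0 := by linarith
        rw [abs_of_nonpos (by linarith), le_max_iff]
        left
        rw [abs_of_neg hfx]
        linarith
    · rw [min_eq_right h1.le, max_eq_left (by linarith)]
      rw [le_max_iff]
      left
      rw [abs_of_nonneg (by linarith), abs_of_nonneg (by linarith)]
  have hmeas_h : AEMeasurable hstar mRes :=
    (hfae.min aemeasurable_const).max aemeasurable_const
  have hmeas_g : AEMeasurable gstar mRes := hfae.sub hmeas_h
  have hhstar_top : eLpNorm hstar ⊤ mRes ≤ ENNReal.ofReal c := by
    rw [eLpNorm_exponent_top]
    exact eLpNormEssSup_le_of_ae_bound (Filter.Eventually.of_forall fun x => by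
      rw [Real.norm_eq_abs]; exact habs_h x)
  have hmemh : MemLp hstar ⊤ mRes :=
    ⟨hmeas_h.aestronglyMeasurable, lt_of_le_of_lt hhstar_top ENNReal.ofReal_lt_top⟩
  -- R and its finiteness
  set R := ∫⁻ u in Ioc (0:ℝ) t, ENNReal.ofReal (mu f u) with hR_def
  have hmufe : ∀ u : ℝ, 0 < u → mu f u ≤ mu g₀ u + e := by
    intro u hu
    rw [hf0]
    exact mu_add_le hGoodg₀ he0 hh₀e hu
  have hRle : R ≤ (∫⁻ x, ENNReal.ofReal |g₀ x| ∂mRes) + ENNReal.ofReal e * ENNReal.ofReal t := by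
    calc R ≤ ∫⁻ u in Ioc (0:ℝ) t, (ENNReal.ofReal (mu g₀ u) + ENNReal.ofReal e) := by
          refine lintegral_mono_ae ?_
          rw [ae_restrict_iff' measurableSet_Ioc]
          exact Filter.Eventually.of_forall fun u hu =>
            le_trans (ENNReal.ofReal_le_ofReal (hmufe u hu.1)) ENNReal.ofReal_add_le
      _ = (∫⁻ u in Ioc (0:ℝ) t, ENNReal.ofReal (mu g₀ u))
            + ENNReal.ofReal e * ENNReal.ofReal t := by
          rw [lintegral_add_right _ measurable_const, lintegral_const,
            Measure.restrict_apply_univ, Real.volume_Ioc, sub_zero]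
      _ ≤ _ :=
          add_le_add_left (le_trans (lintegral_mono_set Ioc_subset_Ioi_self)
            (lintegral_mu_le hGoodg₀ hg₀.1.aemeasurable)) _
  have hRfin : R ≠ ⊤ := by
    refine ne_top_of_le_ne_top ?_ hRle
    have hg₀fin : ∫⁻ x, ENNReal.ofReal |g₀ x| ∂mRes ≠ ⊤ := by
      have h2 := hg₀.2
      rw [eLpNorm_one_eq_lintegral_enorm] at h2
      simp_rw [ofReal_abs]
      exact h2.ne
    exact ENNReal.add_ne_top.mpr
      ⟨hg₀fin, ENNReal.mul_ne_top ENNReal.ofReal_ne_top ENNReal.ofReal_ne_top⟩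
  -- decomposition of R
  have hmuc_lower : ∀ u ∈ Ioc (0:ℝ) t, c ≤ mu f u := fun u hu =>
    mu_antitoneOn hGoodf (mem_Ioi.mpr hu.1) (mem_Ioi.mpr ht) hu.2
  have hmuc_upper : ∀ u ∈ Ioi t, mu f u ≤ c := fun u hu =>
    mu_antitoneOn hGoodf (mem_Ioi.mpr ht) (mem_Ioi.mpr (ht.trans hu)) (le_of_lt hu)
  set Q := ∫⁻ u in Ioc (0:ℝ) t, ENNReal.ofReal (mu f u - c) with hQ_def
  have hRQ : R = Q + ENNReal.ofReal c * ENNReal.ofReal t := by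
    have hpt : ∀ u ∈ Ioc (0:ℝ) t,
        ENNReal.ofReal (mu f u) = ENNReal.ofReal (mu f u - c) + ENNReal.ofReal c := by
      intro u hu
      rw [← ENNReal.ofReal_add (by linarith [hmuc_lower u hu]) hc0, sub_add_cancel]
    rw [hR_def, setLIntegral_congr_fun measurableSet_Ioc (fun u hu => hpt u hu),
      lintegral_add_right _ measurable_const, lintegral_const,
      Measure.restrict_apply_univ, Real.volume_Ioc, sub_zero]
  have hQfin : Q ≠ ⊤ := ne_top_of_le_ne_top hRfin (hRQ ▸ le_self_add)
  have hQfull : ∫⁻ u in Ioi (0:ℝ), ENNReal.ofReal (mu f u - c) = Q := by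
    rw [← Ioc_union_Ioi_eq_Ioi ht.le (a := (0:ℝ)),
      lintegral_union measurableSet_Ioi (Ioc_disjoint_Ioi le_rfl)]
    have hz : ∫⁻ u in Ioi t, ENNReal.ofReal (mu f u - c) = 0 := by
      refine le_antisymm ?_ zero_le
      have : ∫⁻ u in Ioi t, ENNReal.ofReal (mu f u - c) ≤ ∫⁻ _ in Ioi t, 0 := by
        refine lintegral_mono_ae ?_
        rw [ae_restrict_iff' measurableSet_Ioi]
        refine Filter.Eventually.of_forall fun u hu => ?_
        rw [ENNReal.ofReal_eq_zero.mpr (by linarith [hmuc_upper u hu])]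
      simpa using this
    rw [hz, add_zero]
  -- gstar is integrable
  have hgstar_int : ∫⁻ x, (‖gstar x‖₊ : ℝ≥0∞) ∂mRes ≤ Q := by
    calc ∫⁻ x, (‖gstar x‖₊ : ℝ≥0∞) ∂mRes
        ≤ ∫⁻ x, ENNReal.ofReal (|f x| - c) ∂mRes := by
          refine lintegral_mono fun x => ?_
          rw [← ofReal_abs, ← ofReal_max0 (|f x| - c)]
          exact ENNReal.ofReal_le_ofReal (habs_g x)
      _ ≤ ∫⁻ u in Ioi (0:ℝ), ENNReal.ofReal (mu f u - c) :=
          lintegral_sub_le_mu hGoodf hfae hc0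
      _ = Q := hQfull
  have hmemg : MemLp gstar 1 mRes := by
    refine ⟨hmeas_g.aestronglyMeasurable, ?_⟩
    rw [eLpNorm_one_eq_lintegral_enorm]
    exact lt_of_le_of_lt hgstar_int hQfin.lt_top
  -- apply T
  obtain ⟨hTg1, hTgle⟩ := hT1 gstar hmemg
  obtain ⟨hThinf, hThle⟩ := hTinf hstar hmemh
  have hTsplit : T f = T gstar + T hstar := by rw [hsplit, map_add]
  have hTh_bound : ∀ᵐ x ∂mRes, |T hstar x| ≤ c := by
    have h2 : eLpNormEssSup (T hstar) mRes ≤ ENNReal.ofReal c := by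
      rw [← eLpNorm_exponent_top]
      exact le_trans hThle hhstar_top
    filter_upwards [ae_le_eLpNormEssSup (f := T hstar) (μ := mRes)] with x hx
    have h3 := le_trans hx h2
    rw [Real.enorm_eq_ofReal_abs] at h3
    exact (ENNReal.ofReal_le_ofReal_iff hc0).mp h3
  have hGoodTg : Good (T gstar) := good_of_mem1 hTg1
  have hGoodTf : Good (T f) := by rw [hTsplit]; exact good_add hGoodTg hc0 hTh_bound
  have hmuT : ∀ u : ℝ, 0 < u → mu (T f) u ≤ mu (T gstar) u + c := by
    intro u hu
    rw [hTsplit]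
    exact mu_add_le hGoodTg hc0 hTh_bound hu
  set L := ∫⁻ u in Ioc (0:ℝ) t, ENNReal.ofReal (mu (T f) u) with hL_def
  have hLR : L ≤ R := by
    calc L ≤ ∫⁻ u in Ioc (0:ℝ) t,
            (ENNReal.ofReal (mu (T gstar) u) + ENNReal.ofReal c) := by
          refine lintegral_mono_ae ?_
          rw [ae_restrict_iff' measurableSet_Ioc]
          exact Filter.Eventually.of_forall fun u hu =>
            le_trans (ENNReal.ofReal_le_ofReal (hmuT u hu.1)) ENNReal.ofReal_add_le
      _ = (∫⁻ u in Ioc (0:ℝ) t, ENNReal.ofReal (mu (T gstar) u))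
            + ENNReal.ofReal c * ENNReal.ofReal t := by
          rw [lintegral_add_right _ measurable_const, lintegral_const,
            Measure.restrict_apply_univ, Real.volume_Ioc, sub_zero]
      _ ≤ (∫⁻ x, ENNReal.ofReal |T gstar x| ∂mRes)
            + ENNReal.ofReal c * ENNReal.ofReal t := by
          exact add_le_add_left (le_trans (lintegral_mono_set Ioc_subset_Ioi_self)
            (lintegral_mu_le hGoodTg hTg1.1.aemeasurable)) _
      _ ≤ Q + ENNReal.ofReal c * ENNReal.ofReal t := by
          refine add_le_add_left ?_ _
          have h1 : ∫⁻ x, ENNReal.ofReal |T gstar x| ∂mRes = eLpNorm (T gstar) 1 mRes := by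
            rw [eLpNorm_one_eq_lintegral_enorm]
            simp_rw [Real.enorm_eq_ofReal_abs]
          rw [h1]
          refine le_trans hTgle ?_
          rw [eLpNorm_one_eq_lintegral_enorm]
          exact hgstar_int
      _ = R := hRQ.symm
  -- convert to Bochner integrals
  have hmeasTf : AEStronglyMeasurable (mu (T f)) (volume.restrict (Ioc 0 t)) :=
    (aemeasurable_restrict_of_antitoneOn measurableSet_Ioc
      ((mu_antitoneOn hGoodTf).mono Ioc_subset_Ioi_self)).aestronglyMeasurable
  have hmeasf : AEStronglyMeasurable (mu f) (volume.restrict (Ioc 0 t)) :=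
    (aemeasurable_restrict_of_antitoneOn measurableSet_Ioc
      ((mu_antitoneOn hGoodf).mono Ioc_subset_Ioi_self)).aestronglyMeasurable
  rw [integral_eq_lintegral_of_nonneg_ae
      (Filter.Eventually.of_forall fun u => mu_nonneg (T f) u) hmeasTf,
    integral_eq_lintegral_of_nonneg_ae
      (Filter.Eventually.of_forall fun u => mu_nonneg f u) hmeasf]
  exact ENNReal.toReal_mono hRfin hLR
end
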